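/- If ρ is a root of f_n(X) = X^3 - nX^2 - (n+3)X - 1 (in a field where 1 + ρ ≠ 0), then -1/(1+ρ) is also a root of f_n. -/

import Mathlib

theorem shanks_cubic_conjugate_root {K : Type*} [Field K] [CharZero K] (n : ℤ) (ρ : K)
    (hρ : ρ ^ 3 - (n : K) * ρ ^ 2 - ((n : K) + 3) * ρ - 1 = 0) (h1 : 1 + ρ ≠ 0) :
    (-1 / (1 + ρ)) ^ 3 - (n : K) * (-1 / (1 + ρ)) ^ 2 - ((n : K) + 3) * (-1 / (1 + ρ)) - 1 = 0 := by
  field_simp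
  linear_combination (-1) * hρ
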